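/- Let S ∈ I₁ ∩ I₂ with exchange graph G(S) of shortest s–t distance 2(ℓ+1), and let Π = (B₁, A₁, …, A_ℓ, B_{ℓ+1}) be an augmenting set. Then there exists a directed path p = (s, b₁, a₁, b₂, …, b_ℓ, a_ℓ, b_{ℓ+1}, t) in G(S) with b_k ∈ B_k and a_k ∈ A_k for all k. -/

import Mathlib

open Classical

noncomputable section

structure FinMatroid (α : Type*) where
  Indep : Finset α → Prop
  empty_indep : Indep ∅
  subset_indep : ∀ ⦃A B : Finset α⦄, Indep A → B ⊆ A → Indep B
  exchange : ∀ ⦃A B : Finset α⦄, Indep A → Indep B → A.card < B.card →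
    ∃ b ∈ B \ A, Indep (insert b A)

variable {α : Type*} [DecidableEq α]

/-- The rank of a set `T`: the maximum cardinality of an independent subset of `T`. -/
def FinMatroid.rank (M : FinMatroid α) (T : Finset α) : ℕ :=
  (T.powerset.filter fun A => M.Indep A).sup Finset.card

/-- Vertices of the exchange graph: a source `src`, a sink `snk`, and the ground elements. -/
inductive EGV (α : Type*) where
  | src : EGV α
  | snk : EGV α
  | el : α → EGV α

/-- Arcs of the exchange graph `G(S)` for `S ∈ I₁ ∩ I₂`. -/
def egAdj (M₁ M₂ : FinMatroid α) (S : Finset α) : EGV α → EGV α → Prop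
  | EGV.src, EGV.el b => b ∉ S ∧ M₁.Indep (insert b S)
  | EGV.el b, EGV.snk => b ∉ S ∧ M₂.Indep (insert b S)
  | EGV.el x, EGV.el y =>
      (x ∈ S ∧ y ∉ S ∧ M₁.Indep (insert y (S.erase x))) ∨
      (x ∉ S ∧ y ∈ S ∧ M₂.Indep (insert x (S.erase y)))
  | _, _ => False

/-- Directed shortest-path distance in the exchange graph (number of arcs), `⊤` if unreachable. -/
def egDist (M₁ M₂ : FinMatroid α) (S : Finset α) (u v : EGV α) : ℕ∞ :=
  sInf {n : ℕ∞ | ∃ l : List (EGV α),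
    List.Chain' (egAdj M₁ M₂ S) (u :: (l ++ [v])) ∧ n = (l.length : ℕ∞) + 1}

/-- An augmenting set `(B 1, A 1, B 2, …, A ℓ, B (ℓ+1))` of width `w` in the exchange graph
`G(S)`: pairwise disjoint sets with `A k ⊆ D_{2k}`, `B k ⊆ D_{2k-1}` (distance layers from the
source), all of cardinality `w`, with `S + B₁ ∈ I₁`, `S + B_{ℓ+1} ∈ I₂`,
`S − A_k + B_{k+1} ∈ I₁` and `S − A_k + B_k ∈ I₂`. -/
def IsAugSet (M₁ M₂ : FinMatroid α) (S : Finset α) (ℓ w : ℕ)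
    (A B : ℕ → Finset α) : Prop :=
  (∀ k ∈ Finset.Icc 1 ℓ, ∀ a ∈ A k,
      egDist M₁ M₂ S EGV.src (EGV.el a) = ((2 * k : ℕ) : ℕ∞)) ∧
  (∀ k ∈ Finset.Icc 1 (ℓ + 1), ∀ b ∈ B k,
      egDist M₁ M₂ S EGV.src (EGV.el b) = ((2 * k - 1 : ℕ) : ℕ∞)) ∧
  (∀ i ∈ Finset.Icc 1 ℓ, ∀ j ∈ Finset.Icc 1 ℓ, i ≠ j → Disjoint (A i) (A j)) ∧
  (∀ i ∈ Finset.Icc 1 (ℓ + 1), ∀ j ∈ Finset.Icc 1 (ℓ + 1), i ≠ j → Disjoint (B i) (B j)) ∧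
  (∀ i ∈ Finset.Icc 1 ℓ, ∀ j ∈ Finset.Icc 1 (ℓ + 1), Disjoint (A i) (B j)) ∧
  (∀ k ∈ Finset.Icc 1 ℓ, (A k).card = w) ∧
  (∀ k ∈ Finset.Icc 1 (ℓ + 1), (B k).card = w) ∧
  M₁.Indep (S ∪ B 1) ∧
  M₂.Indep (S ∪ B (ℓ + 1)) ∧
  (∀ k ∈ Finset.Icc 1 ℓ, M₁.Indep ((S \ A k) ∪ B (k + 1))) ∧
  (∀ k ∈ Finset.Icc 1 ℓ, M₂.Indep ((S \ A k) ∪ B k))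

/-- parity marker -/
def egPar (S : Finset α) : EGV α → Prop
  | EGV.src => True
  | EGV.snk => True
  | EGV.el x => x ∈ S

lemma egAdj_flip {M₁ M₂ : FinMatroid α} {S : Finset α} {u v : EGV α}
    (h : egAdj M₁ M₂ S u v) : egPar S v ↔ ¬ egPar S u := by
  cases u <;> cases v <;> simp [egAdj, egPar] at h ⊢ <;> tauto

lemma chain_parity {M₁ M₂ : FinMatroid α} {S : Finset α} :
    ∀ (l : List (EGV α)) (u v : EGV α),
      List.Chain' (egAdj M₁ M₂ S) (u :: (l ++ [v])) →
      (egPar S v ↔ (egPar S u ↔ Even (l.length + 1))) := by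
  intro l
  induction l with
  | nil =>
      intro u v h
      simp only [List.Chain', List.nil_append, List.isChain_cons_cons, List.isChain_singleton, and_true] at h
      have := egAdj_flip h
      simp [Nat.even_add_one] at *
      tauto
  | cons w l ih =>
      intro u v h
      simp only [List.Chain', List.cons_append, List.isChain_cons_cons] at h
      obtain ⟨h1, h2⟩ := h
      have h2' := ih w v h2
      have hf := egAdj_flip h1
      have : Even (l.length + 1 + 1) ↔ ¬ Even (l.length + 1) := by
        simp [Nat.even_add_one]
      simp only [List.length_cons]
      rw [this] at *
      tauto

lemma mem_of_egDist {M₁ M₂ : FinMatroid α} {S : Finset α} {x : α} {n : ℕ}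
    (h : egDist M₁ M₂ S EGV.src (EGV.el x) = (n : ℕ∞)) : x ∈ S ↔ Even n := by
  have hlt : egDist M₁ M₂ S EGV.src (EGV.el x) < ((n + 1 : ℕ) : ℕ∞) := by
    rw [h]; exact_mod_cast Nat.lt_succ_self n
  rw [egDist, sInf_lt_iff] at hlt
  obtain ⟨m, hm, hmlt⟩ := hlt
  obtain ⟨l, hchain, hlen⟩ := hm
  have hle : (n : ℕ∞) ≤ m := h ▸ sInf_le (by exact ⟨l, hchain, hlen⟩)
  subst hlen
  have h1 : (l.length : ℕ∞) + 1 = ((l.length + 1 : ℕ) : ℕ∞) := by push_cast; ring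
  rw [h1] at hmlt hle
  have h2 : l.length + 1 < n + 1 := by exact_mod_cast hmlt
  have h3 : n ≤ l.length + 1 := by exact_mod_cast hle
  have hn : l.length + 1 = n := by omega
  have := chain_parity l EGV.src (EGV.el x) hchain
  simp [egPar] at this
  rw [this, hn]

/-- grow an independent set to the size of another independent set -/
lemma grow (M : FinMatroid α) :
    ∀ (n : ℕ) (X T : Finset α), M.Indep X → M.Indep T → X.card + n = T.card →
      ∃ Y, X ⊆ Y ∧ Y ⊆ X ∪ T ∧ M.Indep Y ∧ Y.card = T.card := by
  intro n
  induction n with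
  | zero =>
      intro X T hX hT hc
      exact ⟨X, subset_rfl, Finset.subset_union_left, hX, by omega⟩
  | succ n ih =>
      intro X T hX hT hc
      obtain ⟨e, he0, hIe0⟩ := M.exchange hX hT (by omega)
      have hIe : M.Indep (insert e X) := by
        convert hIe0 using 3
      have he : e ∈ T \ X := by convert he0 using 2 <;> exact congrArg _ (Subsingleton.elim _ _)
      rw [Finset.mem_sdiff] at he
      have hcard : (insert e X).card + n = T.card := by
        rw [Finset.card_insert_of_notMem he.2]; omega
      obtain ⟨Y, hXY, hYsub, hYI, hYc⟩ := ih (insert e X) T hIe hT hcard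
      refine ⟨Y, subset_trans (Finset.subset_insert _ _) hXY, ?_, hYI, hYc⟩
      intro y hy
      have := hYsub hy
      rw [Finset.mem_union, Finset.mem_insert] at this
      rcases this with (rfl | h) | h
      · exact Finset.mem_union_right _ he.1
      · exact Finset.mem_union_left _ h
      · exact Finset.mem_union_right _ h

lemma claim3 (M₂ : FinMatroid α) (S Ak Bk : Finset α) (hS : M₂.Indep S)
    (hInd : M₂.Indep ((S \ Ak) ∪ Bk)) (hAS : Ak ⊆ S) (hAne : Ak.Nonempty)
    (b : α) (hb : b ∈ Bk) (hbS : b ∉ S) :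
    ∃ a ∈ Ak, a ∈ S ∧ M₂.Indep (insert b (S.erase a)) := by
  set X := insert b (S \ Ak) with hXdef
  have hXI : M₂.Indep X := M₂.subset_indep hInd (by
    intro y hy
    rw [hXdef, Finset.mem_insert] at hy
    rcases hy with rfl | hy
    · exact Finset.mem_union_right _ hb
    · exact Finset.mem_union_left _ hy)
  obtain ⟨a0, ha0⟩ := hAne
  have hbX : b ∉ S \ Ak := fun h => hbS (Finset.mem_sdiff.1 h).1
  have hXc : X.card = (S \ Ak).card + 1 := Finset.card_insert_of_notMem hbX
  have hlt : (S \ Ak).card < S.card :=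
    Finset.card_lt_card ⟨Finset.sdiff_subset, fun h =>
      (Finset.mem_sdiff.1 (h (hAS ha0))).2 ha0⟩
  obtain ⟨Y, hXY, hYsub, hYI, hYc⟩ := grow M₂ (S.card - X.card) X S hXI hS (by omega)
  have hbY : b ∈ Y := hXY (Finset.mem_insert_self _ _)
  have hYS : Y ⊆ insert b S := by
    intro y hy
    have := hYsub hy
    rw [Finset.mem_union, hXdef, Finset.mem_insert, Finset.mem_sdiff] at this
    rw [Finset.mem_insert]
    tauto
  -- Y ∩ S = Y.erase b
  have hYinter : Y ∩ S = Y.erase b := by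
    ext y
    rw [Finset.mem_inter, Finset.mem_erase]
    constructor
    · rintro ⟨hy, hyS⟩; exact ⟨fun h => hbS (h ▸ hyS), hy⟩
    · rintro ⟨hne, hy⟩
      refine ⟨hy, ?_⟩
      have := hYS hy
      rw [Finset.mem_insert] at this
      tauto
  have hcard1 : (S \ Y).card = 1 := by
    have h1 := Finset.card_inter_add_card_sdiff S Y
    rw [Finset.inter_comm, hYinter, Finset.card_erase_of_mem hbY] at h1
    omega
  obtain ⟨a, ha⟩ := Finset.card_eq_one.1 hcard1
  have haS : a ∈ S ∧ a ∉ Y := by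
    have : a ∈ S \ Y := ha ▸ Finset.mem_singleton_self a
    exact Finset.mem_sdiff.1 this
  have haA : a ∈ Ak := by
    by_contra hcon
    have : a ∈ X := by
      rw [hXdef, Finset.mem_insert, Finset.mem_sdiff]
      exact Or.inr ⟨haS.1, hcon⟩
    exact haS.2 (hXY this)
  refine ⟨a, haA, haS.1, M₂.subset_indep hYI ?_⟩
  intro y hy
  rw [Finset.mem_insert, Finset.mem_erase] at hy
  rcases hy with rfl | ⟨hne, hyS⟩
  · exact hbY
  · by_contra hyY
    have : y ∈ S \ Y := Finset.mem_sdiff.2 ⟨hyS, hyY⟩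
    rw [ha, Finset.mem_singleton] at this
    exact hne this

lemma claim4 (M₁ : FinMatroid α) (S Ak Bk1 : Finset α) (hS : M₁.Indep S)
    (hInd : M₁.Indep ((S \ Ak) ∪ Bk1)) (hAS : Ak ⊆ S) (hBS : ∀ b ∈ Bk1, b ∉ S)
    (hcard : Ak.card = Bk1.card)
    (a : α) (ha : a ∈ Ak) :
    ∃ b ∈ Bk1, b ∉ S ∧ M₁.Indep (insert b (S.erase a)) := by
  have haS : a ∈ S := hAS ha
  have hXI : M₁.Indep (S.erase a) := M₁.subset_indep hS (Finset.erase_subset _ _)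
  have hdisj : Disjoint (S \ Ak) Bk1 := by
    rw [Finset.disjoint_right]
    intro b hb hb'
    exact hBS b hb (Finset.mem_sdiff.1 hb').1
  have hZc : ((S \ Ak) ∪ Bk1).card = S.card := by
    rw [Finset.card_union_of_disjoint hdisj, Finset.card_sdiff_of_subset hAS]
    have := Finset.card_le_card hAS
    omega
  have hlt : (S.erase a).card < ((S \ Ak) ∪ Bk1).card := by
    rw [hZc, Finset.card_erase_of_mem haS]
    have : 0 < S.card := Finset.card_pos.2 ⟨a, haS⟩
    omega
  obtain ⟨e, he0, hIe0⟩ := M₁.exchange hXI hInd hlt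
  have hIe : M₁.Indep (insert e (S.erase a)) := by
    convert hIe0 using 3
  have he : e ∈ ((S \ Ak) ∪ Bk1) \ S.erase a := by convert he0 using 2 <;> exact congrArg _ (Subsingleton.elim _ _)
  rw [Finset.mem_sdiff, Finset.mem_union, Finset.mem_sdiff] at he
  obtain ⟨he1, he2⟩ := he
  have heB : e ∈ Bk1 := by
    rcases he1 with ⟨heS, heA⟩ | h
    · exfalso
      exact he2 (Finset.mem_erase.2 ⟨fun h => heA (h ▸ ha), heS⟩)
    · exact h
  exact ⟨e, heB, hBS e heB, hIe⟩

/-- Every augmenting set of positive width contains a shortest augmenting path: there are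
`b_k ∈ B_k` and `a_k ∈ A_k` such that `s, b₁, a₁, b₂, …, a_ℓ, b_{ℓ+1}, t` is a directed path
in `G(S)`. -/
theorem augset_contains_path (M₁ M₂ : FinMatroid α) (S : Finset α) (ℓ w : ℕ)
    (A B : ℕ → Finset α)
    (hS₁ : M₁.Indep S) (hS₂ : M₂.Indep S)
    (hdist : egDist M₁ M₂ S EGV.src EGV.snk = ((2 * (ℓ + 1) : ℕ) : ℕ∞))
    (hw : 1 ≤ w)
    (hAug : IsAugSet M₁ M₂ S ℓ w A B) :
    ∃ b a : ℕ → α,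
      (∀ k ∈ Finset.Icc 1 (ℓ + 1), b k ∈ B k) ∧
      (∀ k ∈ Finset.Icc 1 ℓ, a k ∈ A k) ∧
      egAdj M₁ M₂ S EGV.src (EGV.el (b 1)) ∧
      (∀ k ∈ Finset.Icc 1 ℓ, egAdj M₁ M₂ S (EGV.el (b k)) (EGV.el (a k))) ∧
      (∀ k ∈ Finset.Icc 1 ℓ, egAdj M₁ M₂ S (EGV.el (a k)) (EGV.el (b (k + 1)))) ∧
      egAdj M₁ M₂ S (EGV.el (b (ℓ + 1))) EGV.snk := by
  obtain ⟨hAd, hBd, _hAA, _hBB, _hAB, hAw, hBw, hB1, hBl, hI1, hI2⟩ := hAug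
  have hBnotS : ∀ k ∈ Finset.Icc 1 (ℓ + 1), ∀ x ∈ B k, x ∉ S := by
    intro k hk x hx hxS
    have hk1 : 1 ≤ k := (Finset.mem_Icc.1 hk).1
    obtain ⟨m, hm⟩ := (mem_of_egDist (hBd k hk x hx)).1 hxS
    omega
  have hAsub : ∀ k ∈ Finset.Icc 1 ℓ, A k ⊆ S := by
    intro k hk x hx
    exact (mem_of_egDist (hAd k hk x hx)).2 ⟨k, by ring⟩
  have key : ∀ m, m ≤ ℓ → ∃ b a : ℕ → α,
      (∀ k ∈ Finset.Icc 1 (m + 1), b k ∈ B k) ∧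
      (∀ k ∈ Finset.Icc 1 m, a k ∈ A k) ∧
      egAdj M₁ M₂ S EGV.src (EGV.el (b 1)) ∧
      (∀ k ∈ Finset.Icc 1 m, egAdj M₁ M₂ S (EGV.el (b k)) (EGV.el (a k))) ∧
      (∀ k ∈ Finset.Icc 1 m, egAdj M₁ M₂ S (EGV.el (a k)) (EGV.el (b (k + 1)))) := by
    intro m
    induction m with
    | zero =>
        intro _
        have hB1ne : (B 1).Nonempty := Finset.card_pos.1 (by
          rw [hBw 1 (by rw [Finset.mem_Icc]; omega)]; omega)
        obtain ⟨b1, hb1⟩ := hB1ne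
        refine ⟨fun _ => b1, fun _ => b1, ?_, ?_, ?_, ?_, ?_⟩
        · intro k hk
          rw [Finset.mem_Icc] at hk
          have hk1 : k = 1 := by omega
          rw [hk1]; exact hb1
        · intro k hk; rw [Finset.mem_Icc] at hk; omega
        · exact ⟨hBnotS 1 (by rw [Finset.mem_Icc]; omega) b1 hb1,
            M₁.subset_indep hB1 (Finset.insert_subset
              (Finset.mem_union_right _ hb1) Finset.subset_union_left)⟩
        · intro k hk; rw [Finset.mem_Icc] at hk; omega
        · intro k hk; rw [Finset.mem_Icc] at hk; omega
    | succ m ih =>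
        intro hm1
        obtain ⟨b, a, hbB, haA, hsrc, hba, hab⟩ := ih (by omega)
        have hmIcc : m + 1 ∈ Finset.Icc 1 ℓ := by rw [Finset.mem_Icc]; omega
        have hbm : b (m + 1) ∈ B (m + 1) := hbB (m + 1) (by rw [Finset.mem_Icc]; omega)
        have hAne : (A (m + 1)).Nonempty := Finset.card_pos.1 (by rw [hAw _ hmIcc]; omega)
        have hbmS : b (m + 1) ∉ S :=
          hBnotS (m + 1) (by rw [Finset.mem_Icc]; omega) _ hbm
        obtain ⟨a', ha'A, ha'S, ha'I⟩ :=
          claim3 M₂ S (A (m + 1)) (B (m + 1)) hS₂ (hI2 _ hmIcc) (hAsub _ hmIcc) hAne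
            (b (m + 1)) hbm hbmS
        have hBm2Icc : m + 2 ∈ Finset.Icc 1 (ℓ + 1) := by rw [Finset.mem_Icc]; omega
        obtain ⟨b', hb'B, hb'S, hb'I⟩ :=
          claim4 M₁ S (A (m + 1)) (B (m + 2)) hS₁ (hI1 _ hmIcc) (hAsub _ hmIcc)
            (fun x hx => hBnotS (m + 2) hBm2Icc x hx)
            (by rw [hAw _ hmIcc, hBw _ hBm2Icc]) a' ha'A
        refine ⟨fun k => if k = m + 2 then b' else b k,
          fun k => if k = m + 1 then a' else a k, ?_, ?_, ?_, ?_, ?_⟩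
        · intro k hk
          beta_reduce
          rw [Finset.mem_Icc] at hk
          by_cases h : k = m + 2
          · rw [if_pos h, h]; exact hb'B
          · rw [if_neg h]; exact hbB k (by rw [Finset.mem_Icc]; omega)
        · intro k hk
          beta_reduce
          rw [Finset.mem_Icc] at hk
          by_cases h : k = m + 1
          · rw [if_pos h, h]; exact ha'A
          · rw [if_neg h]; exact haA k (by rw [Finset.mem_Icc]; omega)
        · have h1 : (if 1 = m + 2 then b' else b 1) = b 1 := if_neg (by omega)
          beta_reduce
          rw [h1]; exact hsrc
        · intro k hk
          beta_reduce
          rw [Finset.mem_Icc] at hk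
          rw [if_neg (by omega : ¬ k = m + 2)]
          by_cases h : k = m + 1
          · rw [if_pos h, h]
            exact Or.inr ⟨hbmS, ha'S, ha'I⟩
          · rw [if_neg h]; exact hba k (by rw [Finset.mem_Icc]; omega)
        · intro k hk
          beta_reduce
          rw [Finset.mem_Icc] at hk
          by_cases h : k = m + 1
          · subst h
            rw [if_pos rfl, show (if m + 1 + 1 = m + 2 then b' else b (m + 1 + 1)) = b' from if_pos rfl]
            exact Or.inl ⟨ha'S, hb'S, hb'I⟩
          · rw [if_neg h, if_neg (by omega : ¬ k + 1 = m + 2)]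
            exact hab k (by rw [Finset.mem_Icc]; omega)
  obtain ⟨b, a, hbB, haA, hsrc, hba, hab⟩ := key ℓ le_rfl
  refine ⟨b, a, hbB, haA, hsrc, hba, hab, ?_⟩
  have hbl : b (ℓ + 1) ∈ B (ℓ + 1) := hbB _ (by rw [Finset.mem_Icc]; omega)
  exact ⟨hBnotS (ℓ + 1) (by rw [Finset.mem_Icc]; omega) _ hbl,
    M₂.subset_indep hBl (Finset.insert_subset
      (Finset.mem_union_right _ hbl) Finset.subset_union_left)⟩
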